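/- Define Φ : ℝ×(0,∞) → ℝ by Φ(x,y) = |x|·J(L⁻¹(y/|x|)) for x ≠ 0 and Φ(0,y) = 0. Then Φ is jointly convex on ℝ×(0,∞): for all (x₁,y₁), (x₂,y₂) ∈ ℝ×(0,∞) and λ ∈ [0,1], Φ(λx₁+(1−λ)x₂, λy₁+(1−λ)y₂) ≤ λ·Φ(x₁,y₁) + (1−λ)·Φ(x₂,y₂). -/

import Mathlib

/-- Binary entropy function. -/
noncomputable def H2 (x : ℝ) : ℝ := -x * Real.logb 2 x - (1 - x) * Real.logb 2 (1 - x)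

/-- `J`, the derivative of the binary entropy function. -/
noncomputable def J (x : ℝ) : ℝ := Real.logb 2 ((1 - x) / x)

/-- `L(u) = 2·H₂(u)/(1 − 2u)` for `u ∈ [0,1/2)` (with `L(0) = 0`). -/
noncomputable def L (u : ℝ) : ℝ := 2 * H2 u / (1 - 2 * u)

/-- `L⁻¹ : [0,∞) → [0,1/2)`, the inverse of `L`. -/
noncomputable def Linv : ℝ → ℝ := Function.invFunOn L (Set.Ico 0 (1 / 2))

/-- `Φ(x,y) = |x|·J(L⁻¹(y/|x|))` for `x ≠ 0`, and `Φ(0,y) = 0`. -/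
noncomputable def Phi (x y : ℝ) : ℝ := if x = 0 then 0 else |x| * J (Linv (y / |x|))

open Real Set

/-! ### Auxiliary constructs -/

/-- the slope function `b(u) = J'(u)/L'(u)` -/
noncomputable def bb (u : ℝ) : ℝ := (1 - 2*u)^2 / (2 * (u*(1-u)) * Real.log (u*(1-u)))

/-- `b` as a function of `s = u(1-u)` -/
noncomputable def phiS (s : ℝ) : ℝ := (1 - 4*s) / (2 * s * Real.log s)

/-- the derivative of `L` -/
noncomputable def Lder (w : ℝ) : ℝ := (-2 * Real.log (w*(1-w))) / (Real.log 2 * (1-2*w)^2)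

lemma log2_pos : (0:ℝ) < Real.log 2 := Real.log_pos one_lt_two

lemma H2_eq (x : ℝ) : H2 x = (-(x * Real.log x) - ((1-x) * Real.log (1-x))) / Real.log 2 := by
  unfold H2 Real.logb; ring

lemma J_eq {x : ℝ} (hx : 0 < x) (hx1 : x < 1) :
    J x = (Real.log (1-x) - Real.log x) / Real.log 2 := by
  unfold J Real.logb
  rw [Real.log_div (by linarith) hx.ne']

lemma H2_zero : H2 0 = 0 := by simp [H2]

lemma L_zero : L 0 = 0 := by simp [L, H2_zero]

lemma bb_eq_phiS (u : ℝ) : bb u = phiS (u*(1-u)) := by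
  unfold bb phiS; congr 1; ring

/-! ### Derivatives -/

lemma hasDerivAt_H2 {x : ℝ} (hx : 0 < x) (hx1 : x < 1) : HasDerivAt H2 (J x) x := by
  have h1 : HasDerivAt (fun x : ℝ => x * Real.log x) (Real.log x + 1) x :=
    Real.hasDerivAt_mul_log hx.ne'
  have h2 : HasDerivAt (fun x : ℝ => (1-x) * Real.log (1-x)) (-(Real.log (1-x) + 1)) x := by
    have hcomp := (Real.hasDerivAt_mul_log (x := 1-x) (by linarith)).comp x
      ((hasDerivAt_id x).const_sub 1)
    simpa [Function.comp_def] using hcomp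
  have h3 : HasDerivAt (fun x : ℝ => (-(x * Real.log x) - ((1-x) * Real.log (1-x))) / Real.log 2)
      ((-(Real.log x + 1) - -(Real.log (1-x) + 1)) / Real.log 2) x :=
    (h1.neg.sub h2).div_const _
  have hfun : H2 = fun x : ℝ => (-(x * Real.log x) - ((1-x) * Real.log (1-x))) / Real.log 2 :=
    funext H2_eq
  rw [hfun, J_eq hx hx1] at *
  convert h3 using 1
  ring

lemma hasDerivAt_J {x : ℝ} (hx : 0 < x) (hx1 : x < 1) :
    HasDerivAt J (-(1 / (Real.log 2 * (x*(1-x))))) x := by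
  have hx0 : x ≠ 0 := hx.ne'
  have hx1' : (1:ℝ) - x ≠ 0 := by intro h; linarith
  have hl2 : Real.log 2 ≠ 0 := log2_pos.ne'
  have h1 : HasDerivAt (fun x : ℝ => (Real.log (1-x) - Real.log x) / Real.log 2)
      ((-(1/(1-x)) - 1/x) / Real.log 2) x := by
    have hl1 : HasDerivAt (fun x : ℝ => Real.log (1-x)) (-(1/(1-x))) x := by
      have := (Real.hasDerivAt_log (x := 1-x) hx1').comp x
        ((hasDerivAt_id x).const_sub 1)
      simpa [Function.comp_def, one_div, mul_comm] using this
    have hl2' : HasDerivAt Real.log x⁻¹ x := Real.hasDerivAt_log hx0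
    simpa [one_div] using (hl1.sub hl2').div_const (Real.log 2)
  have heq : (fun x : ℝ => (Real.log (1-x) - Real.log x) / Real.log 2) =ᶠ[nhds x] J := by
    have hmem : Set.Ioo (0:ℝ) 1 ∈ nhds x := isOpen_Ioo.mem_nhds ⟨hx, hx1⟩
    filter_upwards [hmem] with y hy
    exact (J_eq hy.1 hy.2).symm
  have h2 := h1.congr_of_eventuallyEq heq.symm
  refine h2.congr_deriv ?_
  field_simp
  ring

lemma L_identity {x : ℝ} (hx : 0 < x) (hx1 : x < 1) :
    2 * J x * (1 - 2*x) + 4 * H2 x = -2 * Real.log (x*(1-x)) / Real.log 2 := by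
  rw [J_eq hx hx1, H2_eq, Real.log_mul hx.ne' (by intro h; linarith)]
  field_simp
  ring

lemma hasDerivAt_L {x : ℝ} (hx : 0 < x) (hx2 : x < 1/2) : HasDerivAt L (Lder x) x := by
  have hx1 : x < 1 := by linarith
  have hden : (1 - 2*x) ≠ 0 := by intro h; nlinarith
  have hl2 : Real.log 2 ≠ 0 := log2_pos.ne'
  have h1 : HasDerivAt (fun u : ℝ => 2 * H2 u) (2 * J x) x := (hasDerivAt_H2 hx hx1).const_mul 2
  have h2 : HasDerivAt (fun u : ℝ => 1 - 2*u) (-2) x := by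
    simpa using ((hasDerivAt_id x).const_mul 2).const_sub 1
  have h3 := h1.div h2 hden
  have hval : (2 * J x * (1 - 2*x) - 2 * H2 x * (-2)) / (1 - 2*x)^2 = Lder x := by
    have hid := L_identity hx hx1
    have hnum : (2 * J x * (1 - 2*x) - 2 * H2 x * (-2)) = -2 * Real.log (x*(1-x)) / Real.log 2 := by
      linarith
    unfold Lder
    rw [hnum, div_div]
  rw [← hval]
  exact h3

/-! ### Sign and monotonicity facts -/

lemma s_mem {u : ℝ} (hu : 0 < u) (hu2 : u < 1/2) : 0 < u*(1-u) ∧ u*(1-u) < 1/4 := by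
  constructor
  · nlinarith
  · nlinarith [sq_nonneg (1 - 2*u)]

lemma log_s_neg {s : ℝ} (hs : 0 < s) (hs4 : s < 1/4) : Real.log s < 0 :=
  Real.log_neg hs (by linarith)

lemma Lder_pos {w : ℝ} (hw : 0 < w) (hw2 : w < 1/2) : 0 < Lder w := by
  obtain ⟨hs, hs4⟩ := s_mem hw hw2
  have h1 := log_s_neg hs hs4
  have h2 : (0:ℝ) < 1 - 2*w := by linarith
  have h3 : (0:ℝ) < Real.log 2 * (1-2*w)^2 := by positivity
  unfold Lder
  apply div_pos (by linarith) h3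

lemma bb_neg {u : ℝ} (hu : 0 < u) (hu2 : u < 1/2) : bb u < 0 := by
  obtain ⟨hs, hs4⟩ := s_mem hu hu2
  have hls := log_s_neg hs hs4
  have h2 : (0:ℝ) < 1 - 2*u := by linarith
  unfold bb
  apply div_neg_of_pos_of_neg
  · positivity
  · exact mul_neg_of_pos_of_neg (by linarith) hls

lemma hasDerivAt_phiS {s : ℝ} (hs : 0 < s) (hs4 : s < 1/4) :
    HasDerivAt phiS (((-4) * (2*s*Real.log s) - (1-4*s) * (2*Real.log s + 2)) / (2*s*Real.log s)^2) s := by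
  have hls := log_s_neg hs hs4
  have hden : 2*s*Real.log s ≠ 0 := by
    have : 2*s*Real.log s < 0 := mul_neg_of_pos_of_neg (by linarith) hls
    exact this.ne
  have hnum : HasDerivAt (fun s : ℝ => 1 - 4*s) (-4) s := by
    simpa using ((hasDerivAt_id s).const_mul 4).const_sub 1
  have hd : HasDerivAt (fun s : ℝ => 2*s*Real.log s) (2*Real.log s + 2) s := by
    have h := (Real.hasDerivAt_mul_log hs.ne').const_mul 2
    have heq : (fun s : ℝ => 2*(s*Real.log s)) = fun s : ℝ => 2*s*Real.log s := by
      funext t; ring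
    rw [heq] at h
    refine h.congr_deriv ?_; ring
  exact hnum.div hd hden

lemma phiS_deriv_nonneg {s : ℝ} (hs : 0 < s) (hs4 : s < 1/4) :
    0 ≤ ((-4) * (2*s*Real.log s) - (1-4*s) * (2*Real.log s + 2)) / (2*s*Real.log s)^2 := by
  apply div_nonneg _ (sq_nonneg _)
  have h1 : Real.log s ≤ s - 1 := Real.log_le_sub_one_of_pos hs
  nlinarith

lemma phiS_mono {s₁ s₂ : ℝ} (h1 : 0 < s₁) (h2 : s₂ < 1/4) (h12 : s₁ ≤ s₂) :
    phiS s₁ ≤ phiS s₂ := by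
  have key : MonotoneOn phiS (Set.Icc s₁ s₂) := by
    have hsub : ∀ x ∈ Set.Icc s₁ s₂, 0 < x ∧ x < 1/4 := fun x hx =>
      ⟨lt_of_lt_of_le h1 hx.1, lt_of_le_of_lt hx.2 h2⟩
    apply monotoneOn_of_deriv_nonneg (convex_Icc _ _)
    · intro x hx
      obtain ⟨hx1, hx2⟩ := hsub x hx
      exact (hasDerivAt_phiS hx1 hx2).continuousAt.continuousWithinAt
    · intro x hx
      rw [interior_Icc] at hx
      obtain ⟨hx1, hx2⟩ := hsub x (Set.mem_Icc_of_Ioo hx)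
      exact (hasDerivAt_phiS hx1 hx2).differentiableAt.differentiableWithinAt
    · intro x hx
      rw [interior_Icc] at hx
      obtain ⟨hx1, hx2⟩ := hsub x (Set.mem_Icc_of_Ioo hx)
      rw [(hasDerivAt_phiS hx1 hx2).deriv]
      exact phiS_deriv_nonneg hx1 hx2
  exact key (Set.left_mem_Icc.2 h12) (Set.right_mem_Icc.2 h12) h12

lemma bb_mono {u v : ℝ} (hu : 0 < u) (hv2 : v < 1/2) (huv : u ≤ v) : bb u ≤ bb v := by
  have hu2 : u < 1/2 := lt_of_le_of_lt huv hv2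
  have hv : 0 < v := lt_of_lt_of_le hu huv
  rw [bb_eq_phiS, bb_eq_phiS]
  apply phiS_mono (s_mem hu hu2).1 (s_mem hv hv2).2
  nlinarith

/-! ### The key tangent-line inequality -/

lemma Lder_mul_bb {w : ℝ} (hw : 0 < w) (hw2 : w < 1/2) :
    Lder w * bb w = -(1 / (Real.log 2 * (w*(1-w)))) := by
  obtain ⟨hs, hs4⟩ := s_mem hw hw2
  have hls : Real.log (w*(1-w)) ≠ 0 := (log_s_neg hs hs4).ne
  have h12 : (1:ℝ) - 2*w ≠ 0 := by intro h; nlinarith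
  have hl2 : Real.log 2 ≠ 0 := log2_pos.ne'
  have hw0 : w ≠ 0 := hw.ne'
  have hw1 : (1:ℝ) - w ≠ 0 := by intro h; nlinarith
  unfold Lder bb
  field_simp

lemma key_hasDerivAt (u : ℝ) {w : ℝ} (hw : 0 < w) (hw2 : w < 1/2) :
    HasDerivAt (fun v => J v - bb u * L v) (Lder w * (bb w - bb u)) w := by
  have h := (hasDerivAt_J hw (by linarith)).sub ((hasDerivAt_L hw hw2).const_mul (bb u))
  refine h.congr_deriv ?_
  rw [mul_sub (Lder w), Lder_mul_bb hw hw2]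
  ring

lemma key_ineq {u v : ℝ} (hu : u ∈ Set.Ioo (0:ℝ) (1/2)) (hv : v ∈ Set.Ioo (0:ℝ) (1/2)) :
    J u + bb u * (L v - L u) ≤ J v := by
  obtain ⟨hu1, hu2⟩ := hu
  obtain ⟨hv1, hv2⟩ := hv
  have hgoal : J u - bb u * L u ≤ J v - bb u * L v → J u + bb u * (L v - L u) ≤ J v := by
    intro h; nlinarith
  apply hgoal
  rcases le_total u v with huv | huv
  · have hmono : MonotoneOn (fun v => J v - bb u * L v) (Set.Icc u v) := by
      have hsub : ∀ x ∈ Set.Icc u v, 0 < x ∧ x < 1/2 := fun x hx =>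
        ⟨lt_of_lt_of_le hu1 hx.1, lt_of_le_of_lt hx.2 hv2⟩
      apply monotoneOn_of_deriv_nonneg (convex_Icc _ _)
      · intro x hx
        obtain ⟨h1, h2⟩ := hsub x hx
        exact (key_hasDerivAt u h1 h2).continuousAt.continuousWithinAt
      · intro x hx
        rw [interior_Icc] at hx
        obtain ⟨h1, h2⟩ := hsub x (Set.mem_Icc_of_Ioo hx)
        exact (key_hasDerivAt u h1 h2).differentiableAt.differentiableWithinAt
      · intro x hx
        rw [interior_Icc] at hx
        obtain ⟨h1, h2⟩ := hsub x (Set.mem_Icc_of_Ioo hx)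
        rw [(key_hasDerivAt u h1 h2).deriv]
        have hb := bb_mono hu1 h2 hx.1.le
        have hp := Lder_pos h1 h2
        nlinarith
    exact hmono (Set.left_mem_Icc.2 huv) (Set.right_mem_Icc.2 huv) huv
  · have hanti : AntitoneOn (fun v => J v - bb u * L v) (Set.Icc v u) := by
      have hsub : ∀ x ∈ Set.Icc v u, 0 < x ∧ x < 1/2 := fun x hx =>
        ⟨lt_of_lt_of_le hv1 hx.1, lt_of_le_of_lt hx.2 hu2⟩
      apply antitoneOn_of_deriv_nonpos (convex_Icc _ _)
      · intro x hx
        obtain ⟨h1, h2⟩ := hsub x hx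
        exact (key_hasDerivAt u h1 h2).continuousAt.continuousWithinAt
      · intro x hx
        rw [interior_Icc] at hx
        obtain ⟨h1, h2⟩ := hsub x (Set.mem_Icc_of_Ioo hx)
        exact (key_hasDerivAt u h1 h2).differentiableAt.differentiableWithinAt
      · intro x hx
        rw [interior_Icc] at hx
        obtain ⟨h1, h2⟩ := hsub x (Set.mem_Icc_of_Ioo hx)
        rw [(key_hasDerivAt u h1 h2).deriv]
        have hb := bb_mono h1 hu2 hx.2.le
        have hp := Lder_pos h1 h2
        nlinarith
    exact hanti (Set.left_mem_Icc.2 huv) (Set.right_mem_Icc.2 huv) huv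

/-! ### Surjectivity of `L` and properties of `Linv` -/

lemma continuous_H2 : Continuous H2 := by
  have hfun : H2 = fun x : ℝ => (-(x * Real.log x) - ((1-x) * Real.log (1-x))) / Real.log 2 :=
    funext H2_eq
  rw [hfun]
  apply Continuous.div_const
  exact Real.continuous_mul_log.neg.sub
    (Real.continuous_mul_log.comp (continuous_const.sub continuous_id))

lemma L_surj {t : ℝ} (ht : 0 ≤ t) : ∃ u ∈ Set.Ico (0:ℝ) (1/2), L u = t := by
  have ht1 : (0:ℝ) < t + 1 := by linarith
  obtain ⟨d, hd0, hd8, hdt⟩ : ∃ d : ℝ, 0 < d ∧ d ≤ 1/8 ∧ d * (8*(t+1)) ≤ 1 := by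
    refine ⟨min (1/8) (1/(8*(t+1))), lt_min (by norm_num) (by positivity), min_le_left _ _, ?_⟩
    calc min (1/8) (1/(8*(t+1))) * (8*(t+1)) ≤ (1/(8*(t+1))) * (8*(t+1)) := by
          apply mul_le_mul_of_nonneg_right (min_le_right _ _) (by positivity)
      _ = 1 := by field_simp
  obtain ⟨c, hc⟩ : ∃ c : ℝ, c = 1/2 - d := ⟨_, rfl⟩
  have hc1 : c < 1/2 := by rw [hc]; linarith
  have hc0 : (1/4 : ℝ) ≤ c := by rw [hc]; linarith
  have hcpos : (0:ℝ) < c := by linarith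
  have hclt1 : c < 1 := by linarith
  have hH2c : (1/4 : ℝ) ≤ H2 c := by
    have h1 : Real.logb 2 c ≤ -1 := by
      unfold Real.logb
      rw [div_le_iff₀ log2_pos]
      have h := Real.log_le_log hcpos (by linarith : c ≤ 1/2)
      rw [show (1/2 : ℝ) = 2⁻¹ by norm_num, Real.log_inv] at h
      linarith
    have h2 : Real.logb 2 (1-c) ≤ 0 := by
      unfold Real.logb
      apply div_nonpos_of_nonpos_of_nonneg _ log2_pos.le
      exact Real.log_nonpos (by linarith) (by linarith)
    have h3 : -c * Real.logb 2 c ≥ c := by nlinarith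
    have h4 : -(1-c) * Real.logb 2 (1-c) ≥ 0 := by nlinarith
    unfold H2
    nlinarith
  have hLc : t ≤ L c := by
    unfold L
    rw [le_div_iff₀ (by rw [hc]; linarith)]
    have h12c : 1 - 2*c = 2*d := by rw [hc]; ring
    rw [h12c]
    nlinarith
  have hcont : ContinuousOn L (Set.Icc 0 c) := by
    apply ContinuousOn.div
    · exact (continuous_const.mul continuous_H2).continuousOn
    · exact (continuous_const.sub (continuous_const.mul continuous_id)).continuousOn
    · intro x hx h
      have hxc : x ≤ c := hx.2
      have : (0:ℝ) < 1 - 2*x := by rw [hc] at hxc; linarith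
      linarith
  have hsub : Set.Icc (L 0) (L c) ⊆ L '' Set.Icc 0 c := intermediate_value_Icc hcpos.le hcont
  have hmem : t ∈ Set.Icc (L 0) (L c) := by
    rw [L_zero]; exact ⟨ht, hLc⟩
  obtain ⟨u, hu, hLu⟩ := hsub hmem
  exact ⟨u, ⟨hu.1, lt_of_le_of_lt hu.2 hc1⟩, hLu⟩

lemma Linv_spec {t : ℝ} (ht : 0 < t) :
    Linv t ∈ Set.Ioo (0:ℝ) (1/2) ∧ L (Linv t) = t := by
  have hs := L_surj ht.le
  have hmem : Linv t ∈ Set.Ico (0:ℝ) (1/2) := Function.invFunOn_mem hs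
  have heq : L (Linv t) = t := Function.invFunOn_eq hs
  refine ⟨⟨?_, hmem.2⟩, heq⟩
  rcases eq_or_lt_of_le hmem.1 with h | h
  · exfalso
    rw [← h, L_zero] at heq
    linarith
  · exact h

lemma J_nonneg' {w : ℝ} (hw : w ∈ Set.Ico (0:ℝ) (1/2)) : 0 ≤ J w := by
  rcases eq_or_lt_of_le hw.1 with h | h
  · rw [← h]
    simp [J]
  · have h2 : w < 1/2 := hw.2
    unfold J
    apply Real.logb_nonneg one_lt_two
    rw [le_div_iff₀ h]
    linarith

lemma Phi_nonneg {x y : ℝ} (hy : 0 < y) : 0 ≤ Phi x y := by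
  unfold Phi
  split_ifs with hx
  · exact le_refl 0
  · have habs : 0 < |x| := abs_pos.2 hx
    have ht : 0 < y / |x| := div_pos hy habs
    obtain ⟨hmem, -⟩ := Linv_spec ht
    exact mul_nonneg habs.le (J_nonneg' ⟨hmem.1.le, hmem.2⟩)

theorem stmt17 (x₁ x₂ y₁ y₂ lam : ℝ) (hy₁ : 0 < y₁) (hy₂ : 0 < y₂)
    (hlam : lam ∈ Set.Icc (0 : ℝ) 1) :
    Phi (lam * x₁ + (1 - lam) * x₂) (lam * y₁ + (1 - lam) * y₂) ≤
      lam * Phi x₁ y₁ + (1 - lam) * Phi x₂ y₂ := by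
  obtain ⟨hl0, hl1⟩ := hlam
  have hl1' : 0 ≤ 1 - lam := by linarith
  have hyb : 0 < lam * y₁ + (1 - lam) * y₂ := by
    rcases eq_or_lt_of_le hl0 with h | h
    · rw [← h]; simpa using hy₂
    · have h1 : 0 < lam * y₁ := mul_pos h hy₁
      have h2 : 0 ≤ (1-lam) * y₂ := mul_nonneg hl1' hy₂.le
      linarith
  have hP1 := Phi_nonneg (x := x₁) hy₁
  have hP2 := Phi_nonneg (x := x₂) hy₂
  by_cases hxb : lam * x₁ + (1 - lam) * x₂ = 0
  · have hL : Phi (lam * x₁ + (1 - lam) * x₂) (lam * y₁ + (1 - lam) * y₂) = 0 := by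
      simp [Phi, hxb]
    rw [hL]
    have h1 := mul_nonneg hl0 hP1
    have h2 := mul_nonneg hl1' hP2
    linarith
  · have habs : 0 < |lam * x₁ + (1 - lam) * x₂| := abs_pos.2 hxb
    have htb0 : 0 < (lam * y₁ + (1 - lam) * y₂) / |lam * x₁ + (1 - lam) * x₂| :=
      div_pos hyb habs
    obtain ⟨humem, huL⟩ := Linv_spec htb0
    set u := Linv ((lam * y₁ + (1 - lam) * y₂) / |lam * x₁ + (1 - lam) * x₂|) with hu
    set B := bb u with hB
    have hBneg : B < 0 := bb_neg humem.1 humem.2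
    set A := J u - B * L u with hA
    have hLu : 0 ≤ L u := by rw [huL]; exact htb0.le
    have hJu : 0 ≤ J u := J_nonneg' ⟨humem.1.le, humem.2⟩
    have hA0 : 0 ≤ A := by nlinarith
    -- the supporting-line lower bound
    have lower : ∀ x y : ℝ, 0 < y → A * |x| + B * y ≤ Phi x y := by
      intro x y hy
      by_cases hx : x = 0
      · subst hx
        rw [show Phi 0 y = 0 from by simp [Phi]]
        simp only [abs_zero, mul_zero, zero_add]
        nlinarith
      · have habs' : 0 < |x| := abs_pos.2 hx
        have ht' : 0 < y / |x| := div_pos hy habs'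
        obtain ⟨hvmem, hvL⟩ := Linv_spec ht'
        have hk := key_ineq humem hvmem
        rw [hvL] at hk
        have hgoal : Phi x y = |x| * J (Linv (y / |x|)) := by
          simp only [Phi, if_neg hx]
        rw [hgoal]
        have h3 := mul_le_mul_of_nonneg_left hk habs'.le
        have h4 : |x| * (J u + B * (y / |x| - L u)) = A * |x| + B * y := by
          rw [hA]
          field_simp
          ring
        rw [h4] at h3
        exact h3
    -- equality at the combined point
    have heqb : Phi (lam * x₁ + (1 - lam) * x₂) (lam * y₁ + (1 - lam) * y₂) =
        A * |lam * x₁ + (1 - lam) * x₂| + B * (lam * y₁ + (1 - lam) * y₂) := by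
      simp only [Phi, if_neg hxb]
      rw [← hu]
      have hJu_eq : J u = A + B * L u := by rw [hA]; ring
      rw [hJu_eq, huL]
      field_simp
    rw [heqb]
    have htri : |lam * x₁ + (1 - lam) * x₂| ≤ lam * |x₁| + (1 - lam) * |x₂| := by
      calc |lam * x₁ + (1 - lam) * x₂| ≤ |lam * x₁| + |(1 - lam) * x₂| := abs_add_le _ _
        _ = lam * |x₁| + (1 - lam) * |x₂| := by
            rw [abs_mul, abs_mul, abs_of_nonneg hl0, abs_of_nonneg hl1']
    have h1 := lower x₁ y₁ hy₁
    have h2 := lower x₂ y₂ hy₂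
    have h1' := mul_le_mul_of_nonneg_left h1 hl0
    have h2' := mul_le_mul_of_nonneg_left h2 hl1'
    have htri' := mul_le_mul_of_nonneg_left htri hA0
    nlinarith
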